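/- Let A be a strictly positive m×n matrix. If r, c ∈ ℝ^m_{>0} × ℝ^n_{>0} and r', c' are two pairs of positive scaling vectors such that both scaled matrices B[i,j] = r_i · c_j · A[i,j] and B'[i,j] = r'_i · c'_j · A[i,j] satisfy the normalization that the product of entries in each row equals 1 and the product of entries in each column equals 1, then B = B'. -/

import Mathlib

lemma pow_inj_aux {x y : ℝ} (hx : 0 < x) (hy : 0 < y) {n : ℕ} (hn : n ≠ 0)
    (h : x ^ n = y ^ n) : x = y := by
  rcases lt_trichotomy x y with h' | h' | h'
  · exact absurd h (ne_of_lt (pow_lt_pow_left₀ h' hx.le hn))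
  · exact h'
  · exact absurd h.symm (ne_of_lt (pow_lt_pow_left₀ h' hy.le hn))

/-- Uniqueness of the row/column product-normalized scaling of a positive matrix. -/
theorem stmt_0 (m n : ℕ) (A : Fin m → Fin n → ℝ) (hA : ∀ i j, 0 < A i j)
    (r : Fin m → ℝ) (c : Fin n → ℝ) (r' : Fin m → ℝ) (c' : Fin n → ℝ)
    (hr : ∀ i, 0 < r i) (hc : ∀ j, 0 < c j) (hr' : ∀ i, 0 < r' i) (hc' : ∀ j, 0 < c' j)
    (hrow : ∀ i, ∏ j, r i * c j * A i j = 1)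
    (hcol : ∀ j, ∏ i, r i * c j * A i j = 1)
    (hrow' : ∀ i, ∏ j, r' i * c' j * A i j = 1)
    (hcol' : ∀ j, ∏ i, r' i * c' j * A i j = 1) :
    ∀ i j, r i * c j * A i j = r' i * c' j * A i j := by
  intro i j
  have hm : 0 < m := i.pos
  have hn : 0 < n := j.pos
  set α : Fin m → ℝ := fun i => r i / r' i with hαdef
  set β : Fin n → ℝ := fun j => c j / c' j with hβdef
  have hαpos : ∀ i, 0 < α i := fun i => div_pos (hr i) (hr' i)
  have hβpos : ∀ j, 0 < β j := fun j => div_pos (hc j) (hc' j)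
  have hPβ : 0 < ∏ k, β k := Finset.prod_pos fun k _ => hβpos k
  have key1 : ∀ i, α i ^ n * ∏ k, β k = 1 := by
    intro i
    have h : ∏ k, (α i * β k) = 1 := by
      have he : ∏ k, (α i * β k)
          = (∏ k, r i * c k * A i k) / (∏ k, r' i * c' k * A i k) := by
        rw [← Finset.prod_div_distrib]
        refine Finset.prod_congr rfl fun k _ => ?_
        have := (hA i k).ne'
        have := (hr' i).ne'
        have := (hc' k).ne'
        field_simp [hαdef, hβdef]
        simp only [hαdef, hβdef]
        field_simp
      rw [he, hrow i, hrow' i]; norm_num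
    simpa [Finset.prod_mul_distrib, Finset.prod_const, Finset.card_univ] using h
  have key2 : ∀ j, β j ^ m * ∏ k, α k = 1 := by
    intro j
    have h : ∏ k, (β j * α k) = 1 := by
      have he : ∏ k, (β j * α k)
          = (∏ k, r k * c j * A k j) / (∏ k, r' k * c' j * A k j) := by
        rw [← Finset.prod_div_distrib]
        refine Finset.prod_congr rfl fun k _ => ?_
        have := (hA k j).ne'
        have := (hr' k).ne'
        have := (hc' j).ne'
        field_simp [hαdef, hβdef]
        simp only [hαdef, hβdef]
        field_simp
      rw [he, hcol j, hcol' j]; norm_num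
    simpa [Finset.prod_mul_distrib, Finset.prod_const, Finset.card_univ] using h
  have hαconst : ∀ i', α i' = α i := by
    intro i'
    have h1 := key1 i'
    have h2 := key1 i
    have : α i' ^ n = α i ^ n := by
      have := h1.trans h2.symm
      exact mul_right_cancel₀ hPβ.ne' this
    exact pow_inj_aux (hαpos i') (hαpos i) hn.ne' this
  have hprodα : ∏ k, α k = α i ^ m := by
    rw [Finset.prod_congr rfl fun k _ => hαconst k]
    simp [Finset.prod_const, Finset.card_univ]
  have hmain : β j * α i = 1 := by
    have h := key2 j
    rw [hprodα, ← mul_pow] at h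
    have : (β j * α i) ^ m = 1 ^ m := by rw [h, one_pow]
    exact pow_inj_aux (mul_pos (hβpos j) (hαpos i)) one_pos hm.ne' this
  have : r i * c j = r' i * c' j := by
    have hβα : c j / c' j * (r i / r' i) = 1 := hmain
    have hne : c' j * r' i ≠ 0 := (mul_pos (hc' j) (hr' i)).ne'
    rw [div_mul_div_comm, div_eq_one_iff_eq hne] at hβα
    linarith [hβα]
  rw [this]
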